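/- Let (X, 𝓜, μ) be a measure space with 0 < μ(X) < ∞ and let {𝔅_n}_{n≥0} be a filtration: 𝔅_0 = {X}, each 𝔅_n is a finite or countable partition of X into measurable sets of positive measure, and each A ∈ 𝔅_n is a union of members of 𝔅_{n+1}. Set 𝔅 = ⋃_{n≥0} 𝔅_n; for A ∈ 𝔅_n let its children be the members of 𝔅_{n+1} contained in A, and define the martingale difference Δ_A f = Σ_{B child of A} (f_B − f_A)·1_B, where f_B = μ(B)⁻¹ ∫_B f. For B ∈ 𝔅 let B* denote the largest set A ∈ 𝔅 with B ⊆ A and μ(A) ≤ 2μ(B) (which exists since the ancestors of B form a finite chain up to X). Then for every f ∈ L¹(X), every B ∈ 𝔅 and every A ∈ 𝔅, the function Δ_A(f · 1_{X∖B*}) is μ-a.e. constant on B; consequently, for every choice of coefficients ε_A with |ε_A| ≤ 1 and every N ≥ 0, the partial martingale transform Σ_{A ∈ 𝔅_0 ∪ … ∪ 𝔅_N} ε_A Δ_A(f · 1_{X∖B*}) is μ-a.e. constant on B. -/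
import Mathlib


open MeasureTheory Set
open scoped ENNReal

/-- the mean `f_B` of `f` over a set `B`. -/
noncomputable def mean {X : Type*} [MeasurableSpace X] (μ : Measure X) (f : X → ℝ)
    (B : Set X) : ℝ :=
  (∫ x in B, f x ∂μ) / (μ B).toReal

/-- the martingale difference `Δ_A f = ∑_{B child of A} (f_B − f_A)·1_B`, for `A ∈ 𝔅n m`,
the children being the members of `𝔅n (m+1)` contained in `A`. -/
noncomputable def mdiff {X : Type*} [MeasurableSpace X] (μ : Measure X)
    (𝔅n : ℕ → Set (Set X)) (m : ℕ) (A : Set X) (f : X → ℝ) (x : X) : ℝ :=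
  ∑' B : {B : Set X // B ∈ 𝔅n (m + 1) ∧ B ⊆ A},
    Set.indicator (B : Set X) (fun _ => mean μ f B - mean μ f A) x

theorem martingale_transform_locally_constant
    {X : Type*} [MeasurableSpace X] (μ : Measure X)
    (hpos : 0 < μ Set.univ) (hfin : μ Set.univ < ∞)
    (𝔅n : ℕ → Set (Set X))
    (h0 : 𝔅n 0 = {Set.univ})
    (hcount : ∀ m, (𝔅n m).Countable)
    (hmeas : ∀ m, ∀ A ∈ 𝔅n m, MeasurableSet A)
    (hApos : ∀ m, ∀ A ∈ 𝔅n m, 0 < μ A)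
    (hdisj : ∀ m, (𝔅n m).PairwiseDisjoint id)
    (hcover : ∀ m, ⋃₀ 𝔅n m = Set.univ)
    (hrefine : ∀ m, ∀ A ∈ 𝔅n m, A = ⋃₀ {B ∈ 𝔅n (m + 1) | B ⊆ A}) :
    ∀ f : X → ℝ, Integrable f μ →
      ∀ (m : ℕ) (B : Set X), B ∈ 𝔅n m →
        ∀ Bstar : Set X,
          (∃ k, Bstar ∈ 𝔅n k) → B ⊆ Bstar → μ Bstar ≤ 2 * μ B →
          (∀ (k : ℕ) (A : Set X), A ∈ 𝔅n k → B ⊆ A → μ A ≤ 2 * μ B → A ⊆ Bstar) →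
          (∀ (l : ℕ), ∀ A ∈ 𝔅n l,
            ∃ c : ℝ, ∀ᵐ x ∂μ, x ∈ B →
              mdiff μ 𝔅n l A (Set.indicator Bstarᶜ f) x = c) ∧
          (∀ ε : ℕ → Set X → ℝ, (∀ l A, |ε l A| ≤ 1) →
            ∀ N : ℕ, ∃ c : ℝ, ∀ᵐ x ∂μ, x ∈ B →
              (∑ l ∈ Finset.range (N + 1), ∑' A : 𝔅n l,
                ε l (A : Set X) * mdiff μ 𝔅n l (A : Set X) (Set.indicator Bstarᶜ f) x) = c) := by
  intro f hf m B hB Bstar hBstar_mem hBsub hBle hmax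
  set g : X → ℝ := Set.indicator Bstarᶜ f with hg
  -- one-step nesting
  have step : ∀ k, ∀ C ∈ 𝔅n (k+1), ∀ A ∈ 𝔅n k, C ⊆ A ∨ Disjoint C A := by
    intro k C hC A hA
    by_cases hd : Disjoint C A
    · exact Or.inr hd
    · left
      obtain ⟨x, hxC, hxA⟩ := Set.not_disjoint_iff.mp hd
      rw [hrefine k A hA] at hxA
      obtain ⟨C', ⟨hC', hC'A⟩, hxC'⟩ := hxA
      have hCC : C = C' := by
        by_contra hne
        exact Set.disjoint_left.mp (hdisj (k+1) hC hC' hne) hxC hxC'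
      rw [hCC]; exact hC'A
  -- full nesting
  have nest : ∀ k m', m' ≤ k → ∀ B' ∈ 𝔅n m', ∀ C ∈ 𝔅n k, C ⊆ B' ∨ Disjoint C B' := by
    intro k
    induction k with
    | zero =>
      intro m' hm' B' hB' C hC
      interval_cases m'
      rw [h0] at hB'
      rw [Set.mem_singleton_iff] at hB'
      exact Or.inl (hB' ▸ Set.subset_univ C)
    | succ k ih =>
      intro m' hm' B' hB' C hC
      rcases Nat.eq_or_lt_of_le hm' with heq | hlt
      · subst heq
        by_cases hCB : C = B'
        · exact Or.inl hCB.le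
        · exact Or.inr (hdisj _ hC hB' hCB)
      · by_cases hd : Disjoint C B'
        · exact Or.inr hd
        · left
          obtain ⟨x, hxC, hxB⟩ := Set.not_disjoint_iff.mp hd
          have hxU : x ∈ ⋃₀ 𝔅n k := by rw [hcover k]; trivial
          obtain ⟨A, hA, hxA⟩ := hxU
          have hCA : C ⊆ A :=
            (step k C hC A hA).resolve_right (Set.not_disjoint_iff.mpr ⟨x, hxC, hxA⟩)
          have hAB : A ⊆ B' :=
            (ih m' (Nat.lt_succ_iff.mp hlt) B' hB' A hA).resolve_right
              (Set.not_disjoint_iff.mpr ⟨x, hxA, hxB⟩)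
          exact hCA.trans hAB
  -- means of g vanish on subsets of Bstar
  have mean_zero : ∀ S : Set X, S ⊆ Bstar → mean μ g S = 0 := by
    intro S hS
    have : ∫ x in S, g x ∂μ = 0 := by
      apply setIntegral_eq_zero_of_forall_eq_zero
      intro x hx
      exact Set.indicator_of_notMem (by simpa using hS hx) f
    rw [mean, this, zero_div]
  -- value of mdiff at a point in a child
  have mdiff_eq : ∀ (l : ℕ) (A C : Set X) (hC : C ∈ 𝔅n (l+1)) (hCA : C ⊆ A)
      (x : X), x ∈ C → ∀ h : X → ℝ,
      mdiff μ 𝔅n l A h x = mean μ h C - mean μ h A := by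
    intro l A C hC hCA x hx h
    rw [mdiff, tsum_eq_single (⟨C, hC, hCA⟩ : {B : Set X // B ∈ 𝔅n (l+1) ∧ B ⊆ A})]
    · exact Set.indicator_of_mem hx _
    · intro b hb
      apply Set.indicator_of_notMem
      intro hxb
      have hne : (b : Set X) ≠ C := fun hEq => hb (Subtype.ext hEq)
      exact Set.disjoint_left.mp (hdisj (l+1) b.2.1 hC hne) hxb hx
  -- mdiff vanishes at points in no child
  have mdiff_zero : ∀ (l : ℕ) (A : Set X) (x : X) (h : X → ℝ),
      (∀ C ∈ 𝔅n (l+1), C ⊆ A → x ∉ C) → mdiff μ 𝔅n l A h x = 0 := by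
    intro l A x h hx
    rw [mdiff]
    have : ∀ b : {B : Set X // B ∈ 𝔅n (l+1) ∧ B ⊆ A},
        Set.indicator (b : Set X) (fun _ => mean μ h b - mean μ h A) x = 0 :=
      fun b => Set.indicator_of_notMem (hx b b.2.1 b.2.2) _
    rw [tsum_congr this, tsum_zero]
  -- the key constancy statement
  have key : ∀ l, ∀ A ∈ 𝔅n l, ∃ c : ℝ, ∀ x ∈ B, mdiff μ 𝔅n l A g x = c := by
    intro l A hA
    rcases le_or_gt m l with hml | hlm
    · refine ⟨0, fun x hx => ?_⟩
      by_cases hex : ∃ C ∈ 𝔅n (l+1), C ⊆ A ∧ x ∈ C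
      · obtain ⟨C, hC, hCA, hxC⟩ := hex
        rw [mdiff_eq l A C hC hCA x hxC g]
        have hCB : C ⊆ B := (nest (l+1) m (by omega) B hB C hC).resolve_right
          (Set.not_disjoint_iff.mpr ⟨x, hxC, hx⟩)
        have hAB : A ⊆ B := (nest l m hml B hB A hA).resolve_right
          (Set.not_disjoint_iff.mpr ⟨x, hCA hxC, hx⟩)
        rw [mean_zero C (hCB.trans hBsub), mean_zero A (hAB.trans hBsub), sub_zero]
      · push_neg at hex
        exact mdiff_zero l A x g hex
    · by_cases hex : ∃ C ∈ 𝔅n (l+1), C ⊆ A ∧ B ⊆ C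
      · obtain ⟨C, hC, hCA, hBC⟩ := hex
        exact ⟨mean μ g C - mean μ g A, fun x hx => mdiff_eq l A C hC hCA x (hBC hx) g⟩
      · refine ⟨0, fun x hx => mdiff_zero l A x g ?_⟩
        intro C hC hCA hxC
        have hBC : B ⊆ C := (nest m (l+1) (by omega) C hC B hB).resolve_right
          (Set.not_disjoint_iff.mpr ⟨x, hx, hxC⟩)
        exact hex ⟨C, hC, hCA, hBC⟩
  constructor
  · intro l A hA
    obtain ⟨c, hc⟩ := key l A hA
    exact ⟨c, ae_of_all μ hc⟩
  · intro ε hε N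
    choose! c hc using key
    refine ⟨∑ l ∈ Finset.range (N+1), ∑' A : 𝔅n l, ε l (A : Set X) * c l (A : Set X),
      ae_of_all μ fun x hx => ?_⟩
    refine Finset.sum_congr rfl fun l _ => tsum_congr fun A => ?_
    rw [hc l (A : Set X) A.2 x hx]
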